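/- Every eigenfunction of the flat Klein bottle K_1 with eigenvalue 4, i.e. every nonzero function of the form u(x,y) = A cos(2x) + B sin(2x) + C cos(2y), has at most 4 nodal domains on K_1; since 4 = λ₅(K_1), the eigenvalue 4 is not Courant-sharp. -/

import Mathlib

open Real
open Set

/-- The identification relation on `ℝ²` defining the flat Klein bottle `K_1`
(`a = b = 2π`): `(x,y) ↦ (x + kπ, (−1)^k y + 2πl)`, `k, l ∈ ℤ`. -/
def kleinRel (p q : ℝ × ℝ) : Prop :=
  ∃ k l : ℤ, q.1 = p.1 + k * π ∧ q.2 = (-1 : ℝ) ^ k * p.2 + 2 * π * l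

/-- The flat Klein bottle `K_1` as a quotient topological space. -/
def KleinBottle : Type := Quot kleinRel

instance : TopologicalSpace KleinBottle :=
  (instTopologicalSpaceQuot : TopologicalSpace (Quot kleinRel))

lemma components_le_four {α : Type*} [TopologicalSpace α] (T : Set α) (S : Fin 4 → Set α)
    (hconn : ∀ i, IsPreconnected (S i)) (hsub : ∀ i, S i ⊆ T) (hcov : T ⊆ ⋃ i, S i) :
    Nat.card (ConnectedComponents ↥T) ≤ 4 := by
  by_cases hT : T.Nonempty
  · obtain ⟨x₀, hx₀⟩ := hT
    have key : ∀ i, IsPreconnected ((Subtype.val) ⁻¹' (S i) : Set ↥T) := by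
      intro i
      rw [← Topology.IsInducing.subtypeVal.isPreconnected_image]
      rw [Subtype.image_preimage_coe, Set.inter_eq_self_of_subset_right (hsub i)]
      exact hconn i
    classical
    set f : Fin 4 → ConnectedComponents ↥T := fun i =>
      if h : ((Subtype.val) ⁻¹' (S i) : Set ↥T).Nonempty then ConnectedComponents.mk h.choose
      else ConnectedComponents.mk ⟨x₀, hx₀⟩ with hf
    have hsurj : Function.Surjective f := by
      intro c
      obtain ⟨x, rfl⟩ := ConnectedComponents.surjective_coe c
      obtain ⟨i, hi⟩ := Set.mem_iUnion.mp (hcov x.2)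
      have hne : ((Subtype.val) ⁻¹' (S i) : Set ↥T).Nonempty := ⟨x, hi⟩
      refine ⟨i, ?_⟩
      rw [hf]; simp only [dif_pos hne]
      refine ConnectedComponents.coe_eq_coe.mpr ?_
      exact (connectedComponent_eq
        ((key i).subset_connectedComponent hne.choose_spec hi))
    calc Nat.card (ConnectedComponents ↥T) ≤ Nat.card (Fin 4) :=
          Nat.card_le_card_of_surjective f hsurj
      _ = 4 := by simp
  · rw [Set.not_nonempty_iff_eq_empty] at hT
    subst hT
    have : IsEmpty (↥(∅ : Set α)) := by simp
    have : IsEmpty (ConnectedComponents ↥(∅ : Set α)) := by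
      constructor; intro c
      obtain ⟨x, _⟩ := ConnectedComponents.surjective_coe c
      exact this.elim x
    simp [Nat.card_of_isEmpty]


lemma starV (S : Set (ℝ×ℝ)) (ψ : ℝ) (hL : ∀ y : ℝ, ((ψ, y) : ℝ×ℝ) ∈ S)
    (hseg : ∀ p ∈ S, ∀ t ∈ Set.Icc (0:ℝ) 1, ((ψ + t * (p.1 - ψ), p.2) : ℝ×ℝ) ∈ S) :
    IsPreconnected S := by
  have hLine : IsPreconnected ({ψ} ×ˢ (univ : Set ℝ)) :=
    ((convex_singleton ψ).prod convex_univ).isPreconnected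
  have hLsub : {ψ} ×ˢ (univ : Set ℝ) ⊆ S := by
    rintro ⟨a, b⟩ ⟨ha, -⟩
    simp only [mem_singleton_iff] at ha
    subst ha; exact hL b
  have hEq : S = ⋃₀ { A | ∃ p ∈ S, A = segment ℝ ((ψ, p.2) : ℝ×ℝ) p ∪ {ψ} ×ˢ (univ : Set ℝ) } := by
    apply Set.Subset.antisymm
    · intro p hp
      exact ⟨_, ⟨p, hp, rfl⟩, Or.inl (right_mem_segment ℝ _ _)⟩
    · rintro q ⟨A, ⟨p, hp, rfl⟩, hq⟩
      rcases hq with hq | hq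
      · rw [segment_eq_image] at hq
        obtain ⟨θ, hθ, rfl⟩ := hq
        have : ((1 - θ) • ((ψ, p.2) : ℝ×ℝ) + θ • p) = ((ψ + θ * (p.1 - ψ), p.2) : ℝ×ℝ) := by
          simp [Prod.ext_iff, Prod.smul_def]; constructor <;> ring
        show (1 - θ) • _ + θ • p ∈ S
        rw [this]
        exact hseg p hp θ hθ
      · exact hLsub hq
  rw [hEq]
  apply isPreconnected_sUnion ((ψ, 0) : ℝ×ℝ)
  · rintro A ⟨p, hp, rfl⟩
    exact Or.inr ⟨rfl, trivial⟩
  · rintro A ⟨p, hp, rfl⟩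
    apply IsPreconnected.union ((ψ, p.2) : ℝ×ℝ)
    · exact left_mem_segment ℝ _ _
    · exact ⟨rfl, trivial⟩
    · exact (convex_segment _ _).isPreconnected
    · exact hLine

lemma starH (S : Set (ℝ×ℝ)) (η : ℝ) (hL : ∀ x : ℝ, ((x, η) : ℝ×ℝ) ∈ S)
    (hseg : ∀ p ∈ S, ∀ t ∈ Set.Icc (0:ℝ) 1, ((p.1, η + t * (p.2 - η)) : ℝ×ℝ) ∈ S) :
    IsPreconnected S := by
  have hLine : IsPreconnected ((univ : Set ℝ) ×ˢ {η}) :=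
    (convex_univ.prod (convex_singleton η)).isPreconnected
  have hLsub : (univ : Set ℝ) ×ˢ {η} ⊆ S := by
    rintro ⟨a, b⟩ ⟨-, hb⟩
    simp only [mem_singleton_iff] at hb
    subst hb; exact hL a
  have hEq : S = ⋃₀ { A | ∃ p ∈ S, A = segment ℝ ((p.1, η) : ℝ×ℝ) p ∪ (univ : Set ℝ) ×ˢ {η} } := by
    apply Set.Subset.antisymm
    · intro p hp
      exact ⟨_, ⟨p, hp, rfl⟩, Or.inl (right_mem_segment ℝ _ _)⟩
    · rintro q ⟨A, ⟨p, hp, rfl⟩, hq⟩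
      rcases hq with hq | hq
      · rw [segment_eq_image] at hq
        obtain ⟨θ, hθ, rfl⟩ := hq
        have : ((1 - θ) • ((p.1, η) : ℝ×ℝ) + θ • p) = ((p.1, η + θ * (p.2 - η)) : ℝ×ℝ) := by
          simp [Prod.ext_iff, Prod.smul_def]; constructor <;> ring
        show (1 - θ) • _ + θ • p ∈ S
        rw [this]
        exact hseg p hp θ hθ
      · exact hLsub hq
  rw [hEq]
  apply isPreconnected_sUnion ((0, η) : ℝ×ℝ)
  · rintro A ⟨p, hp, rfl⟩
    exact Or.inr ⟨trivial, rfl⟩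
  · rintro A ⟨p, hp, rfl⟩
    apply IsPreconnected.union ((p.1, η) : ℝ×ℝ)
    · exact left_mem_segment ℝ _ _
    · exact ⟨trivial, rfl⟩
    · exact (convex_segment _ _).isPreconnected
    · exact hLine


noncomputable def wfun (r c ψ η : ℝ) (p : ℝ × ℝ) : ℝ :=
  r * Real.cos (2*(p.1 - ψ)) + c * Real.cos (2*(p.2 - η))

lemma wfun_inv (r c ψ η : ℝ) (m : ℤ) (hη : η = m * (π/2)) (p : ℝ × ℝ) (k l : ℤ) :
    wfun r c ψ η (p.1 + k*π, (-1:ℝ)^k * p.2 + 2*π*l) = wfun r c ψ η p := by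
  unfold wfun
  simp only
  congr 1
  · congr 1
    have h1 : 2*((p.1 + k*π) - ψ) = 2*(p.1 - ψ) + (k:ℝ)*(2*π) := by ring
    rw [h1, Real.cos_add_int_mul_two_pi]
  · congr 1
    rcases Int.even_or_odd k with ⟨k₂, hk⟩ | ⟨k₂, hk⟩
    · have hpow : ((-1:ℝ)^k) = 1 := by
        subst hk
        rw [show k₂ + k₂ = 2*k₂ by ring, zpow_mul]
        norm_num
      rw [hpow]
      have h2 : 2*((1 * p.2 + 2*π*l) - η) = 2*(p.2 - η) + ((2*l : ℤ):ℝ)*(2*π) := by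
        push_cast; ring
      rw [h2, Real.cos_add_int_mul_two_pi]
    · have hpow : ((-1:ℝ)^k) = -1 := by
        subst hk
        rw [zpow_add₀ (by norm_num : (-1:ℝ) ≠ 0), zpow_mul]
        norm_num
      rw [hpow]
      have h2 : 2*((-1 * p.2 + 2*π*l) - η) = -(2*(p.2 - η)) + ((2*l - m : ℤ):ℝ)*(2*π) := by
        push_cast
        rw [hη]; ring
      rw [h2, Real.cos_add_int_mul_two_pi, Real.cos_neg]

lemma floor_le_mul (t : ℝ) {d : ℝ} (hd : 0 < d) : (⌊t/d⌋ : ℝ) * d ≤ t := by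
  have h1 := Int.floor_le (t/d)
  calc (⌊t/d⌋ : ℝ) * d ≤ (t/d) * d := mul_le_mul_of_nonneg_right h1 hd.le
    _ = t := div_mul_cancel₀ t hd.ne'

lemma lt_floor_mul (t : ℝ) {d : ℝ} (hd : 0 < d) : t < ((⌊t/d⌋ : ℝ) + 1) * d := by
  have h1 := Int.lt_floor_add_one (t/d)
  calc t = (t/d) * d := (div_mul_cancel₀ t hd.ne').symm
    _ < ((⌊t/d⌋ : ℝ) + 1) * d := mul_lt_mul_of_pos_right h1 hd

lemma shift_x (x c : ℝ) : ∃ k : ℤ, x + k*π ∈ Set.Ioc (c - π/2) (c + π/2) := by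
  refine ⟨⌊(c + π/2 - x)/π⌋, ?_, ?_⟩
  · have := lt_floor_mul (c + π/2 - x) Real.pi_pos
    nlinarith
  · have := floor_le_mul (c + π/2 - x) Real.pi_pos
    nlinarith

lemma shift_y (y c : ℝ) : ∃ l : ℤ, y + 2*π*l ∈ Set.Ico (c - π/2) (c + 3*π/2) := by
  have h2π : (0:ℝ) < 2*π := by positivity
  refine ⟨-⌊(y - (c - π/2))/(2*π)⌋, ?_, ?_⟩
  · have := floor_le_mul (y - (c - π/2)) h2π
    push_cast
    nlinarith
  · have := lt_floor_mul (y - (c - π/2)) h2π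
    push_cast
    nlinarith

lemma near_x (x : ℝ) : ∃ M : ℤ, x - M*π ∈ Set.Ico (-(π/2)) (π/2) := by
  refine ⟨⌊(x + π/2)/π⌋, ?_, ?_⟩
  · have := floor_le_mul (x + π/2) Real.pi_pos
    nlinarith
  · have := lt_floor_mul (x + π/2) Real.pi_pos
    nlinarith


lemma cos_shrink (a : ℝ) (t : ℝ) (ht : t ∈ Set.Icc (0:ℝ) 1) (ha : |a| ≤ π) :
    Real.cos a ≤ Real.cos (t * a) := by
  obtain ⟨ht0, ht1⟩ := ht
  have h1 : |t * a| ≤ |a| := by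
    rw [abs_mul, abs_of_nonneg ht0]
    nlinarith [abs_nonneg a]
  calc Real.cos a = Real.cos |a| := (Real.cos_abs a).symm
    _ ≤ Real.cos |t * a| :=
        Real.cos_le_cos_of_nonneg_of_le_pi (abs_nonneg _) ha h1
    _ = Real.cos (t * a) := Real.cos_abs _

lemma stripV_pre (r c ψ η : ℝ) (hc : 0 ≤ c) (hcr : c < r) :
    IsPreconnected {p : ℝ×ℝ | 0 < wfun r c ψ η p ∧ |p.1 - ψ| < π/2} := by
  apply starV _ ψ
  · intro y
    constructor
    · have h1 := Real.neg_one_le_cos (2*(y - η))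
      have : Real.cos (2*((ψ:ℝ) - ψ)) = 1 := by norm_num
      simp only [wfun, this]
      nlinarith
    · simp [Real.pi_pos]
  · rintro p ⟨hw, hx⟩ t ht
    have ha : |2*(p.1 - ψ)| ≤ π := by
      rw [abs_mul]
      simp only [abs_two]
      nlinarith [abs_nonneg (p.1 - ψ)]
    have hcos := cos_shrink (2*(p.1 - ψ)) t ht ha
    constructor
    · have key : 2*((ψ + t*(p.1 - ψ)) - ψ) = t * (2*(p.1 - ψ)) := by ring
      simp only [wfun, key] at *
      nlinarith [mul_le_mul_of_nonneg_left hcos (le_of_lt (lt_of_le_of_lt hc hcr))]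
    · simp only
      rw [add_sub_cancel_left, abs_mul, abs_of_nonneg ht.1]
      calc t * |p.1 - ψ| ≤ 1 * |p.1 - ψ| :=
            mul_le_mul_of_nonneg_right ht.2 (abs_nonneg _)
        _ < π/2 := by rwa [one_mul]

lemma stripH_pre (r c ψ η η₀ : ℝ) (hr : 0 ≤ r) (hrc : r < c)
    (hcos : ∀ y : ℝ, Real.cos (2*(y - η)) = Real.cos (2*(y - η₀))) :
    IsPreconnected {p : ℝ×ℝ | 0 < wfun r c ψ η p ∧ |p.2 - η₀| < π/2} := by
  apply starH _ η₀
  · intro x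
    constructor
    · have h1 := Real.neg_one_le_cos (2*(x - ψ))
      have h2 : Real.cos (2*((η₀:ℝ) - η)) = 1 := by rw [hcos]; norm_num
      simp only [wfun, h2]
      nlinarith
    · simp [Real.pi_pos]
  · rintro p ⟨hw, hy⟩ t ht
    have ha : |2*(p.2 - η₀)| ≤ π := by
      rw [abs_mul]
      simp only [abs_two]
      nlinarith [abs_nonneg (p.2 - η₀)]
    have hcos2 := cos_shrink (2*(p.2 - η₀)) t ht ha
    constructor
    · have key : 2*((η₀ + t*(p.2 - η₀)) - η₀) = t * (2*(p.2 - η₀)) := by ring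
      simp only [wfun] at *
      rw [hcos (η₀ + t*(p.2 - η₀)), key]
      rw [hcos p.2] at hw
      nlinarith [mul_le_mul_of_nonneg_left hcos2 (le_of_lt (lt_of_le_of_lt hr hrc))]
    · simp only
      rw [add_sub_cancel_left, abs_mul, abs_of_nonneg ht.1]
      calc t * |p.2 - η₀| ≤ 1 * |p.2 - η₀| :=
            mul_le_mul_of_nonneg_right ht.2 (abs_nonneg _)
        _ < π/2 := by rwa [one_mul]


lemma diamond_convex (a b : ℝ) : Convex ℝ {p : ℝ×ℝ | |p.1 - a| + |p.2 - b| < π/2} := by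
  rintro p hp q hq s t hs ht hst
  simp only [mem_setOf_eq] at *
  have h1 : |(s • p + t • q).1 - a| ≤ s * |p.1 - a| + t * |q.1 - a| := by
    have : (s • p + t • q).1 - a = s * (p.1 - a) + t * (q.1 - a) := by
      simp [Prod.smul_def]
      linear_combination a * hst
    rw [this]
    calc |s * (p.1 - a) + t * (q.1 - a)| ≤ |s * (p.1 - a)| + |t * (q.1 - a)| := abs_add_le _ _
      _ = s * |p.1 - a| + t * |q.1 - a| := by
          rw [abs_mul, abs_mul, abs_of_nonneg hs, abs_of_nonneg ht]
  have h2 : |(s • p + t • q).2 - b| ≤ s * |p.2 - b| + t * |q.2 - b| := by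
    have : (s • p + t • q).2 - b = s * (p.2 - b) + t * (q.2 - b) := by
      simp [Prod.smul_def]
      linear_combination b * hst
    rw [this]
    calc |s * (p.2 - b) + t * (q.2 - b)| ≤ |s * (p.2 - b)| + |t * (q.2 - b)| := abs_add_le _ _
      _ = s * |p.2 - b| + t * |q.2 - b| := by
          rw [abs_mul, abs_mul, abs_of_nonneg hs, abs_of_nonneg ht]
  rcases eq_or_lt_of_le hs with hs0 | hs0
  · subst hs0
    have hts : t = 1 := by linarith
    subst hts
    linarith
  · have k1 := mul_lt_mul_of_pos_left hp hs0
    have k2 := mul_le_mul_of_nonneg_left hq.le ht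
    have k3 : s * (π/2) + t * (π/2) = π/2 := by linear_combination (π/2) * hst
    nlinarith [k1, k2, k3]

-- |X| + |Y| < π/2  implies  cos 2X + cos 2Y > 0
lemma diamond_cos_pos (X Y : ℝ) (h : |X| + |Y| < π/2) :
    0 < Real.cos (2*X) + Real.cos (2*Y) := by
  have hX := abs_nonneg X
  have hY := abs_nonneg Y
  have h1 : Real.cos (π - 2*|Y|) < Real.cos (2*|X|) := by
    apply Real.cos_lt_cos_of_nonneg_of_le_pi (by positivity) (by linarith)
    linarith
  rw [Real.cos_pi_sub] at h1
  have e1 : Real.cos (2*|X|) = Real.cos (2*X) := by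
    rw [show 2*|X| = |2*X| by rw [abs_mul]; simp [abs_two], Real.cos_abs]
  have e2 : Real.cos (2*|Y|) = Real.cos (2*Y) := by
    rw [show 2*|Y| = |2*Y| by rw [abs_mul]; simp [abs_two], Real.cos_abs]
  rw [e1, e2] at h1
  linarith

-- cos 2X + cos 2Y > 0, |X| ≤ π/2, |Y| ≤ π/2  implies  |X| + |Y| < π/2
lemma diamond_cos_rev (X Y : ℝ) (hX : |X| ≤ π/2) (hY : |Y| ≤ π/2)
    (h : 0 < Real.cos (2*X) + Real.cos (2*Y)) : |X| + |Y| < π/2 := by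
  by_contra hcon
  push_neg at hcon
  have hX0 := abs_nonneg X
  have hY0 := abs_nonneg Y
  have h1 : Real.cos (2*|Y|) ≤ Real.cos (π - 2*|X|) := by
    apply Real.cos_le_cos_of_nonneg_of_le_pi (by linarith) (by linarith)
    linarith
  rw [Real.cos_pi_sub] at h1
  have e1 : Real.cos (2*|X|) = Real.cos (2*X) := by
    rw [show 2*|X| = |2*X| by rw [abs_mul]; simp [abs_two], Real.cos_abs]
  have e2 : Real.cos (2*|Y|) = Real.cos (2*Y) := by
    rw [show 2*|Y| = |2*Y| by rw [abs_mul]; simp [abs_two], Real.cos_abs]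
  rw [e1, e2] at h1
  linarith


lemma neg_one_zpow_even (k : ℤ) (h : Even k) : ((-1:ℝ))^k = 1 := by
  obtain ⟨a, rfl⟩ := h
  rw [show a + a = 2*a by ring, zpow_mul]
  norm_num

lemma neg_one_zpow_odd (k : ℤ) (h : Odd k) : ((-1:ℝ))^k = -1 := by
  obtain ⟨a, rfl⟩ := h
  rw [zpow_add₀ (by norm_num : (-1:ℝ) ≠ 0), zpow_mul]
  norm_num

lemma pos_cover (r c ψ η : ℝ) (m : ℤ) (hη : η = m * (π/2)) (hr : 0 ≤ r) (hc : 0 ≤ c)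
    (hrc : 0 < r + c) :
    ∃ S₁ S₂ : Set (ℝ×ℝ), IsPreconnected S₁ ∧ IsPreconnected S₂ ∧
      S₁ ⊆ {p : ℝ×ℝ | 0 < wfun r c ψ η p} ∧ S₂ ⊆ {p : ℝ×ℝ | 0 < wfun r c ψ η p} ∧
      ∀ p : ℝ×ℝ, 0 < wfun r c ψ η p → ∃ q, kleinRel p q ∧ (q ∈ S₁ ∨ q ∈ S₂) := by
  rcases lt_trichotomy c r with hlt | heq | hgt
  · -- c < r : one vertical strip
    refine ⟨{p : ℝ×ℝ | 0 < wfun r c ψ η p ∧ |p.1 - ψ| < π/2}, ∅,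
      stripV_pre r c ψ η hc hlt, isPreconnected_empty,
      fun p hp => hp.1, empty_subset _, ?_⟩
    intro p hp
    obtain ⟨k, hk1, hk2⟩ := shift_x p.1 ψ
    refine ⟨(p.1 + (k:ℝ)*π, (-1:ℝ)^k * p.2 + 2*π*((0:ℤ):ℝ)), ⟨k, 0, rfl, rfl⟩, Or.inl ?_⟩
    have hw := wfun_inv r c ψ η m hη p k 0
    have hwq : 0 < wfun r c ψ η (p.1 + (k:ℝ)*π, (-1:ℝ)^k * p.2 + 2*π*((0:ℤ):ℝ)) := by
      rw [hw]; exact hp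
    refine ⟨hwq, ?_⟩
    have hne : p.1 + (k:ℝ)*π ≠ ψ + π/2 := by
      intro heq2
      have harg : 2*((p.1 + (k:ℝ)*π) - ψ) = π := by rw [heq2]; ring
      have hcos1 : Real.cos (2*((p.1 + (k:ℝ)*π) - ψ)) = -1 := by rw [harg, Real.cos_pi]
      have hle := Real.cos_le_one (2*(((-1:ℝ)^k * p.2 + 2*π*((0:ℤ):ℝ)) - η))
      have : wfun r c ψ η (p.1 + (k:ℝ)*π, (-1:ℝ)^k * p.2 + 2*π*((0:ℤ):ℝ)) ≤ -r + c := by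
        simp only [wfun, hcos1]
        nlinarith
      linarith
    have hlt2 : p.1 + (k:ℝ)*π < ψ + π/2 := lt_of_le_of_ne hk2 hne
    show |p.1 + (k:ℝ)*π - ψ| < π/2
    rw [abs_lt]
    exact ⟨by linarith [hk1], by linarith⟩
  · -- c = r : two diamonds
    subst heq
    have hr0 : 0 < c := by linarith
    have hcosπ : ∀ y : ℝ, Real.cos (2*(y - η)) = Real.cos (2*(y - (η+π))) := by
      intro y
      rw [show 2*(y - η) = 2*(y - (η+π)) + 2*π by ring, Real.cos_add_two_pi]
    refine ⟨{p : ℝ×ℝ | |p.1 - ψ| + |p.2 - η| < π/2},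
      {p : ℝ×ℝ | |p.1 - ψ| + |p.2 - (η+π)| < π/2},
      (diamond_convex ψ η).isPreconnected, (diamond_convex ψ (η+π)).isPreconnected,
      ?_, ?_, ?_⟩
    · intro p hp
      have h1 := diamond_cos_pos (p.1 - ψ) (p.2 - η) hp
      simp only [mem_setOf_eq, wfun]
      nlinarith [mul_pos hr0 h1]
    · intro p hp
      have h1 := diamond_cos_pos (p.1 - ψ) (p.2 - (η+π)) hp
      simp only [mem_setOf_eq, wfun]
      rw [hcosπ p.2]
      nlinarith [mul_pos hr0 h1]
    · intro p hp
      have hsum : 0 < Real.cos (2*(p.1 - ψ)) + Real.cos (2*(p.2 - η)) := by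
        by_contra hno
        push_neg at hno
        have h2 : c * (Real.cos (2*(p.1 - ψ)) + Real.cos (2*(p.2 - η))) ≤ 0 :=
          mul_nonpos_of_nonneg_of_nonpos hr0.le hno
        simp only [wfun] at hp
        nlinarith
      obtain ⟨M, hM1, hM2⟩ := near_x (p.1 - ψ)
      obtain ⟨N, hN1, hN2⟩ := near_x (p.2 - η)
      set X' := p.1 - ψ - (M:ℝ)*π with hX'
      set Y' := p.2 - η - (N:ℝ)*π with hY'
      have eX : Real.cos (2*(p.1 - ψ)) = Real.cos (2*X') := by
        rw [show 2*(p.1 - ψ) = 2*X' + (M:ℝ)*(2*π) by rw [hX']; ring,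
          Real.cos_add_int_mul_two_pi]
      have eY : Real.cos (2*(p.2 - η)) = Real.cos (2*Y') := by
        rw [show 2*(p.2 - η) = 2*Y' + (N:ℝ)*(2*π) by rw [hY']; ring,
          Real.cos_add_int_mul_two_pi]
      have habs : |X'| + |Y'| < π/2 := by
        apply diamond_cos_rev
        · exact abs_le.mpr ⟨by linarith, by linarith⟩
        · exact abs_le.mpr ⟨by linarith, by linarith⟩
        · rw [← eX, ← eY]; exact hsum
      rcases Int.even_or_odd M with hMe | hMo
      · have hpow : ((-1:ℝ))^(-M : ℤ) = 1 := neg_one_zpow_even _ (by simpa using hMe.neg)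
        rcases Int.even_or_odd N with ⟨N₂, hN₂⟩ | ⟨N₂, hN₂⟩
        · -- q ∈ S₁
          refine ⟨(p.1 + ((-M : ℤ):ℝ)*π, (-1:ℝ)^(-M : ℤ) * p.2 + 2*π*((-N₂ : ℤ):ℝ)),
            ⟨-M, -N₂, rfl, rfl⟩, Or.inl ?_⟩
          have hNR : (N:ℝ) = (N₂:ℝ) + (N₂:ℝ) := by exact_mod_cast congrArg Int.cast hN₂
          have e1 : (p.1 + ((-M : ℤ):ℝ)*π) - ψ = X' := by push_cast; rw [hX']; ring
          have e2 : ((-1:ℝ)^(-M : ℤ) * p.2 + 2*π*((-N₂ : ℤ):ℝ)) - η = Y' := by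
            rw [hpow, hY']; push_cast; linear_combination π * hNR
          simp only [mem_setOf_eq, e1, e2]
          exact habs
        · -- q ∈ S₂
          refine ⟨(p.1 + ((-M : ℤ):ℝ)*π, (-1:ℝ)^(-M : ℤ) * p.2 + 2*π*((-N₂ : ℤ):ℝ)),
            ⟨-M, -N₂, rfl, rfl⟩, Or.inr ?_⟩
          have hNR : (N:ℝ) = 2*(N₂:ℝ) + 1 := by exact_mod_cast congrArg Int.cast hN₂
          have e1 : (p.1 + ((-M : ℤ):ℝ)*π) - ψ = X' := by push_cast; rw [hX']; ring
          have e2 : ((-1:ℝ)^(-M : ℤ) * p.2 + 2*π*((-N₂ : ℤ):ℝ)) - (η+π) = Y' := by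
            rw [hpow, hY']; push_cast; linear_combination π * hNR
          simp only [mem_setOf_eq, e1, e2]
          exact habs
      · have hpow : ((-1:ℝ))^(-M : ℤ) = -1 := neg_one_zpow_odd _ (by simpa using hMo.neg)
        rcases Int.even_or_odd (N + m) with ⟨s, hs⟩ | ⟨s, hs⟩
        · -- q ∈ S₁
          refine ⟨(p.1 + ((-M : ℤ):ℝ)*π, (-1:ℝ)^(-M : ℤ) * p.2 + 2*π*((s : ℤ):ℝ)),
            ⟨-M, s, rfl, rfl⟩, Or.inl ?_⟩
          have hsR : (N:ℝ) + (m:ℝ) = (s:ℝ) + (s:ℝ) := by exact_mod_cast congrArg Int.cast hs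
          have e1 : (p.1 + ((-M : ℤ):ℝ)*π) - ψ = X' := by push_cast; rw [hX']; ring
          have e2 : ((-1:ℝ)^(-M : ℤ) * p.2 + 2*π*((s : ℤ):ℝ)) - η = -Y' := by
            rw [hpow, hY', hη]; push_cast; linear_combination (-π) * hsR
          simp only [mem_setOf_eq, e1, e2, abs_neg]
          exact habs
        · -- q ∈ S₂
          refine ⟨(p.1 + ((-M : ℤ):ℝ)*π, (-1:ℝ)^(-M : ℤ) * p.2 + 2*π*((s+1 : ℤ):ℝ)),
            ⟨-M, s+1, rfl, rfl⟩, Or.inr ?_⟩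
          have hsR : (N:ℝ) + (m:ℝ) = 2*(s:ℝ) + 1 := by exact_mod_cast congrArg Int.cast hs
          have e1 : (p.1 + ((-M : ℤ):ℝ)*π) - ψ = X' := by push_cast; rw [hX']; ring
          have e2 : ((-1:ℝ)^(-M : ℤ) * p.2 + 2*π*((s+1 : ℤ):ℝ)) - (η+π) = -Y' := by
            rw [hpow, hY', hη]; push_cast; linear_combination (-π) * hsR
          simp only [mem_setOf_eq, e1, e2, abs_neg]
          exact habs
  · -- r < c : two horizontal strips
    refine ⟨{p : ℝ×ℝ | 0 < wfun r c ψ η p ∧ |p.2 - η| < π/2},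
      {p : ℝ×ℝ | 0 < wfun r c ψ η p ∧ |p.2 - (η+π)| < π/2},
      stripH_pre r c ψ η η hr hgt (fun y => rfl),
      stripH_pre r c ψ η (η+π) hr hgt (fun y => by
        rw [show 2*(y - η) = 2*(y - (η+π)) + 2*π by ring, Real.cos_add_two_pi]),
      fun p hp => hp.1, fun p hp => hp.1, ?_⟩
    intro p hp
    obtain ⟨l, hl1, hl2⟩ := shift_y p.2 η
    refine ⟨(p.1 + ((0:ℤ):ℝ)*π, (-1:ℝ)^(0:ℤ) * p.2 + 2*π*((l:ℤ):ℝ)), ⟨0, l, rfl, rfl⟩, ?_⟩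
    have hw := wfun_inv r c ψ η m hη p 0 l
    set q : ℝ×ℝ := (p.1 + ((0:ℤ):ℝ)*π, (-1:ℝ)^(0:ℤ) * p.2 + 2*π*((l:ℤ):ℝ)) with hqdef
    have hwq : 0 < wfun r c ψ η q := by rw [hqdef, hw]; exact hp
    have hq2 : q.2 = p.2 + 2*π*(l:ℝ) := by rw [hqdef]; norm_num
    have hxcos := Real.cos_le_one (2*(q.1 - ψ))
    have hne1 : q.2 - η ≠ -(π/2) := by
      intro heq2
      have harg : (2:ℝ)*(q.2 - η) = -π := by rw [heq2]; ring
      have hcos1 : Real.cos (2*(q.2 - η)) = -1 := by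
        rw [harg, show Real.cos (-π) = -1 by rw [Real.cos_neg, Real.cos_pi]]
      have hle : wfun r c ψ η q ≤ r - c := by
        simp only [wfun, hcos1]
        nlinarith
      linarith
    have hne2 : q.2 - η ≠ π/2 := by
      intro heq2
      have harg : (2:ℝ)*(q.2 - η) = π := by rw [heq2]; ring
      have hcos1 : Real.cos (2*(q.2 - η)) = -1 := by rw [harg, Real.cos_pi]
      have hle : wfun r c ψ η q ≤ r - c := by
        simp only [wfun, hcos1]
        nlinarith
      linarith
    have hl1' : η - π/2 ≤ q.2 := by rw [hq2]; exact hl1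
    have hl2' : q.2 < η + 3*π/2 := by rw [hq2]; exact hl2
    rcases lt_trichotomy (q.2 - η) (π/2) with h | h | h
    · refine Or.inl ⟨hwq, ?_⟩
      have hlow : -(π/2) ≤ q.2 - η := by linarith
      exact abs_lt.mpr ⟨lt_of_le_of_ne hlow (Ne.symm hne1), h⟩
    · exact absurd h hne2
    · refine Or.inr ⟨hwq, ?_⟩
      exact abs_lt.mpr ⟨by linarith, by linarith⟩

lemma polar (A B : ℝ) : ∃ r φ : ℝ, 0 ≤ r ∧ A = r * Real.cos φ ∧ B = r * Real.sin φ ∧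
    (¬(A = 0 ∧ B = 0) → 0 < r) := by
  by_cases hAB : A = 0 ∧ B = 0
  · exact ⟨0, 0, le_refl 0, by simp [hAB.1], by simp [hAB.2], fun hcon => absurd hAB hcon⟩
  · set z : ℂ := ⟨A, B⟩ with hz
    have hz0 : z ≠ 0 := by
      intro h0
      rw [Complex.ext_iff] at h0
      exact hAB ⟨h0.1, h0.2⟩
    have habs : (0:ℝ) < ‖z‖ := norm_pos_iff.mpr hz0
    refine ⟨‖z‖, z.arg, habs.le, ?_, ?_, fun _ => habs⟩
    · rw [Complex.cos_arg hz0]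
      show A = ‖z‖ * (A / ‖z‖)
      field_simp
    · rw [Complex.sin_arg]
      show B = ‖z‖ * (B / ‖z‖)
      field_simp


/-- every nonzero eigenfunction
`u(x,y) = A cos(2x) + B sin(2x) + C cos(2y)` of `K_1` with eigenvalue `4` has at
most `4` nodal domains on `K_1`; since `4 = λ₅(K_1)`, this eigenvalue is not
Courant-sharp. -/
theorem lambda5_at_most_four_nodal_domains (A B C : ℝ) (h : ¬ (A = 0 ∧ B = 0 ∧ C = 0)) :
    Nat.card (ConnectedComponents
        ↥(Quot.mk kleinRel ''
          {p : ℝ × ℝ |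
            A * Real.cos (2 * p.1) + B * Real.sin (2 * p.1) + C * Real.cos (2 * p.2) ≠ 0}))
      ≤ 4 := by
  obtain ⟨r, φ, hr0, hA, hB, hrpos⟩ := polar A B
  -- parameters for the C term
  set c : ℝ := |C| with hcdef
  have hc0 : (0:ℝ) ≤ c := abs_nonneg C
  obtain ⟨η, m, hηm, hCeq⟩ :
      ∃ (η : ℝ) (m : ℤ), η = (m:ℝ) * (π/2) ∧ ∀ y : ℝ, C * Real.cos (2*y) = c * Real.cos (2*(y - η)) := by
    rcases le_or_gt 0 C with hC | hC
    · refine ⟨0, 0, by norm_num, fun y => ?_⟩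
      rw [hcdef, abs_of_nonneg hC]
      norm_num
    · refine ⟨π/2, 1, by norm_num, fun y => ?_⟩
      rw [hcdef, abs_of_neg hC]
      rw [show 2*(y - π/2) = 2*y - π by ring, Real.cos_sub_pi]
      ring
  set ψ : ℝ := φ/2 with hψdef
  have hu : ∀ p : ℝ × ℝ,
      A * Real.cos (2 * p.1) + B * Real.sin (2 * p.1) + C * Real.cos (2 * p.2)
        = wfun r c ψ η p := by
    intro p
    have h1 : A * Real.cos (2 * p.1) + B * Real.sin (2 * p.1) = r * Real.cos (2*(p.1 - ψ)) := by
      rw [hψdef, show 2*(p.1 - φ/2) = 2*p.1 - φ by ring, Real.cos_sub, hA, hB]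
      ring
    rw [wfun, ← h1, ← hCeq p.2]
  have huneg : ∀ p : ℝ × ℝ,
      wfun r c (ψ + π/2) (η + π/2) p = -(wfun r c ψ η p) := by
    intro p
    simp only [wfun]
    rw [show 2*(p.1 - (ψ + π/2)) = 2*(p.1 - ψ) - π by ring,
      show 2*(p.2 - (η + π/2)) = 2*(p.2 - η) - π by ring,
      Real.cos_sub_pi, Real.cos_sub_pi]
    ring
  have hrc : 0 < r + c := by
    rcases eq_or_lt_of_le hr0 with hre | hrp
    · have hAB0 : A = 0 ∧ B = 0 := by
        constructor
        · rw [hA, ← hre]; ring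
        · rw [hB, ← hre]; ring
      have hCne : C ≠ 0 := fun hC0 => h ⟨hAB0.1, hAB0.2, hC0⟩
      have : 0 < c := by rw [hcdef]; exact abs_pos.mpr hCne
      linarith
    · linarith
  obtain ⟨S₁, S₂, pc₁, pc₂, sub₁, sub₂, cov₁⟩ := pos_cover r c ψ η m hηm hr0 hc0 hrc
  obtain ⟨S₃, S₄, pc₃, pc₄, sub₃, sub₄, cov₂⟩ :=
    pos_cover r c (ψ + π/2) (η + π/2) (m + 1)
      (by rw [hηm]; push_cast; ring) hr0 hc0 hrc
  set U : Set (ℝ × ℝ) := {p : ℝ × ℝ |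
    A * Real.cos (2 * p.1) + B * Real.sin (2 * p.1) + C * Real.cos (2 * p.2) ≠ 0} with hUdef
  have hS₁U : S₁ ⊆ U := fun p hp => by
    simp only [hUdef, mem_setOf_eq, hu p]; exact ne_of_gt (sub₁ hp)
  have hS₂U : S₂ ⊆ U := fun p hp => by
    simp only [hUdef, mem_setOf_eq, hu p]; exact ne_of_gt (sub₂ hp)
  have hS₃U : S₃ ⊆ U := fun p hp => by
    simp only [hUdef, mem_setOf_eq, hu p]
    have := sub₃ hp
    rw [mem_setOf_eq, huneg p] at this
    exact ne_of_lt (by linarith)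
  have hS₄U : S₄ ⊆ U := fun p hp => by
    simp only [hUdef, mem_setOf_eq, hu p]
    have := sub₄ hp
    rw [mem_setOf_eq, huneg p] at this
    exact ne_of_lt (by linarith)
  apply components_le_four (Quot.mk kleinRel '' U)
    ![Quot.mk kleinRel '' S₁, Quot.mk kleinRel '' S₂, Quot.mk kleinRel '' S₃,
      Quot.mk kleinRel '' S₄]
  · intro i
    fin_cases i <;>
      simp only [Matrix.cons_val_zero, Matrix.cons_val_one, Matrix.head_cons,
        Matrix.cons_val_two, Matrix.tail_cons, Matrix.cons_val_three] <;>
      [exact pc₁.image _ continuous_quot_mk.continuousOn;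
       exact pc₂.image _ continuous_quot_mk.continuousOn;
       exact pc₃.image _ continuous_quot_mk.continuousOn;
       exact pc₄.image _ continuous_quot_mk.continuousOn]
  · intro i
    fin_cases i <;>
      simp only [Matrix.cons_val_zero, Matrix.cons_val_one, Matrix.head_cons,
        Matrix.cons_val_two, Matrix.tail_cons, Matrix.cons_val_three] <;>
      [exact Set.image_mono hS₁U; exact Set.image_mono hS₂U;
       exact Set.image_mono hS₃U; exact Set.image_mono hS₄U]
  · rintro x ⟨p, hp, rfl⟩
    rw [hUdef, mem_setOf_eq, hu p] at hp
    rcases hp.lt_or_gt with hneg | hpos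
    · have hpos' : 0 < wfun r c (ψ + π/2) (η + π/2) p := by rw [huneg p]; linarith
      obtain ⟨q, hrel, hq⟩ := cov₂ p hpos'
      have hmk : Quot.mk kleinRel p = Quot.mk kleinRel q := Quot.sound hrel
      rcases hq with hq | hq
      · exact Set.mem_iUnion.mpr ⟨2, ⟨q, hq, hmk.symm⟩⟩
      · exact Set.mem_iUnion.mpr ⟨3, ⟨q, hq, hmk.symm⟩⟩
    · obtain ⟨q, hrel, hq⟩ := cov₁ p hpos
      have hmk : Quot.mk kleinRel p = Quot.mk kleinRel q := Quot.sound hrel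
      rcases hq with hq | hq
      · exact Set.mem_iUnion.mpr ⟨0, ⟨q, hq, hmk.symm⟩⟩
      · exact Set.mem_iUnion.mpr ⟨1, ⟨q, hq, hmk.symm⟩⟩
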